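/- The shift map σ is chaotic on Σ₂; that is, there exists δ > 0 such that for every point x ∈ Σ₂ and every nonempty open set V ⊆ Σ₂ there is a point y ∈ V with limsup_{n→∞} d(σⁿ(x), σⁿ(y)) ≥ δ and liminf_{n→∞} d(σⁿ(x), σⁿ(y)) = 0. -/

import Mathlib

open Filter

/-- The shift map on the space `Σ₂` of binary sequences. -/
def shift (β : ℕ → Bool) : ℕ → Bool := fun i => β (i + 1)

/-- The metric `d(β,γ) = ∑ᵢ |βᵢ - γᵢ| / 2^(i+1)` on `Σ₂`. -/
noncomputable def d2 (β γ : ℕ → Bool) : ℝ :=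
  ∑' i : ℕ, |(if β i then (1 : ℝ) else 0) - (if γ i then (1 : ℝ) else 0)| / 2 ^ (i + 1)

/-- A set is open in `Σ₂` (with respect to the metric `d2`). -/
def IsOpen2 (V : Set (ℕ → Bool)) : Prop :=
  ∀ β ∈ V, ∃ ε : ℝ, 0 < ε ∧ ∀ γ : ℕ → Bool, d2 β γ < ε → γ ∈ V

lemma absdiff_le_one (a b : Bool) :
    |(if a then (1 : ℝ) else 0) - (if b then (1 : ℝ) else 0)| ≤ 1 := by
  cases a <;> cases b <;> norm_num

lemma absdiff_eq_one (a b : Bool) (h : a ≠ b) :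
    |(if a then (1 : ℝ) else 0) - (if b then (1 : ℝ) else 0)| = 1 := by
  cases a <;> cases b <;> simp_all

lemma term_le (a b : Bool) (n : ℕ) :
    |(if a then (1 : ℝ) else 0) - (if b then (1 : ℝ) else 0)| / 2 ^ (n + 1)
      ≤ 1 / 2 ^ (n + 1) := by
  gcongr
  exact absdiff_le_one a b

lemma d2_summable (β γ : ℕ → Bool) :
    Summable (fun i => |(if β i then (1 : ℝ) else 0) - (if γ i then (1 : ℝ) else 0)| / 2 ^ (i + 1)) := by
  have hg : Summable (fun i : ℕ => (1/2 : ℝ) ^ i * (1/2)) :=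
    (summable_geometric_of_lt_one (by norm_num) (by norm_num)).mul_right _
  refine Summable.of_nonneg_of_le (fun i => by positivity) (fun i => ?_) hg
  calc |(if β i then (1 : ℝ) else 0) - (if γ i then (1 : ℝ) else 0)| / 2 ^ (i + 1)
      ≤ 1 / 2 ^ (i + 1) := term_le _ _ _
    _ = (1/2 : ℝ) ^ i * (1/2) := by rw [← pow_succ, div_pow, one_pow]

set_option maxHeartbeats 1000000 in
lemma d2_le_pow (β γ : ℕ → Bool) (k : ℕ) (h : ∀ i < k, β i = γ i) :
    d2 β γ ≤ (1/2 : ℝ) ^ k := by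
  have hs := d2_summable β γ
  rw [d2, ← Summable.sum_add_tsum_nat_add k hs]
  have h1 : ∑ i ∈ Finset.range k,
      |(if β i then (1 : ℝ) else 0) - (if γ i then (1 : ℝ) else 0)| / 2 ^ (i + 1) = 0 := by
    apply Finset.sum_eq_zero
    intro i hi
    rw [h i (Finset.mem_range.1 hi), sub_self, abs_zero, zero_div]
  rw [h1, zero_add]
  have h2 : ∑' i : ℕ, ((1/2 : ℝ) ^ i * ((1/2) ^ (k+1))) = (1/2 : ℝ) ^ k := by
    rw [tsum_mul_right, tsum_geometric_of_lt_one (by norm_num) (by norm_num), pow_succ]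
    norm_num
    ring
  rw [← h2]
  have hg : Summable (fun i : ℕ => (1/2 : ℝ) ^ i * ((1/2 : ℝ)) ^ (k+1)) :=
    (summable_geometric_of_lt_one (by norm_num) (by norm_num)).mul_right _
  refine Summable.tsum_le_tsum (fun i => ?_) ((summable_nat_add_iff k).2 hs) hg
  calc |(if β (i+k) then (1 : ℝ) else 0) - (if γ (i+k) then (1 : ℝ) else 0)| / 2 ^ (i + k + 1)
      ≤ 1 / 2 ^ (i + k + 1) := term_le _ _ _
    _ = (1/2 : ℝ) ^ i * (1/2) ^ (k+1) := by rw [← pow_add, div_pow, one_pow, add_assoc]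

lemma d2_le_one (β γ : ℕ → Bool) : d2 β γ ≤ 1 := by
  simpa using d2_le_pow β γ 0 (by omega)

lemma d2_nonneg (β γ : ℕ → Bool) : 0 ≤ d2 β γ :=
  tsum_nonneg (fun i => by positivity)

lemma half_le_d2 (β γ : ℕ → Bool) (h : β 0 ≠ γ 0) : (1/2 : ℝ) ≤ d2 β γ := by
  have := Summable.le_tsum (d2_summable β γ) 0 (fun j _ => by positivity)
  rw [absdiff_eq_one _ _ h] at this
  simpa [d2] using this

lemma shift_iter (β : ℕ → Bool) (n i : ℕ) : shift^[n] β i = β (i + n) := by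
  induction n generalizing β i with
  | zero => simp
  | succ n ih =>
    rw [Function.iterate_succ_apply, ih]
    simp only [shift]
    ring_nf

/-- The shift map is chaotic on `Σ₂`: there exists `δ > 0` such that for every
point `x` and every nonempty open set `V` there is `y ∈ V` with
`limsup d(σⁿx, σⁿy) ≥ δ` and `liminf d(σⁿx, σⁿy) = 0`. -/
theorem shift_chaotic :
    ∃ δ : ℝ, 0 < δ ∧
      ∀ x : ℕ → Bool, ∀ V : Set (ℕ → Bool), IsOpen2 V → V.Nonempty →
        ∃ y ∈ V,
          δ ≤ limsup (fun n => d2 (shift^[n] x) (shift^[n] y)) atTop ∧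
          liminf (fun n => d2 (shift^[n] x) (shift^[n] y)) atTop = 0 := by
  classical
  refine ⟨1/2, by norm_num, ?_⟩
  rintro x V hV ⟨z, hz⟩
  obtain ⟨ε, hε, hball⟩ := hV z hz
  obtain ⟨N, hN⟩ := exists_pow_lt_of_lt_one hε (by norm_num : (1/2 : ℝ) < 1)
  set y : ℕ → Bool :=
    fun i => if i < N then z i else if ∃ j : ℕ, i = N + 2 ^ j then !(x i) else x i with hy
  have hyz : d2 z y ≤ (1/2 : ℝ) ^ N := by
    refine d2_le_pow _ _ N (fun i hi => ?_)
    rw [hy]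
    simp only
    rw [if_pos hi]
  have hflip : ∀ k : ℕ, y (N + 2 ^ k) = !(x (N + 2 ^ k)) := by
    intro k
    have hp : 0 < 2 ^ k := pow_pos (by norm_num) k
    rw [hy]
    simp only
    rw [if_neg (by omega), if_pos ⟨k, rfl⟩]
  have hagree : ∀ k i : ℕ, i < 2 ^ k - 1 → y (N + 2 ^ k + 1 + i) = x (N + 2 ^ k + 1 + i) := by
    intro k i hi
    have hp : 0 < 2 ^ k := pow_pos (by norm_num) k
    have h2 : ¬ ∃ j : ℕ, N + 2 ^ k + 1 + i = N + 2 ^ j := by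
      rintro ⟨j, hj⟩
      have hlt : 2 ^ k < 2 ^ j := by omega
      have hkj : k < j := (Nat.pow_lt_pow_iff_right (by norm_num)).1 hlt
      have h3 : 2 ^ (k + 1) ≤ 2 ^ j := Nat.pow_le_pow_right (by norm_num) hkj
      have h4 : 2 ^ (k + 1) = 2 * 2 ^ k := by ring
      omega
    rw [hy]
    simp only
    rw [if_neg (by omega), if_neg h2]
  refine ⟨y, hball y (lt_of_le_of_lt hyz hN), ?_, ?_⟩
  · -- limsup ≥ 1/2
    apply le_limsup_of_frequently_le
    · rw [frequently_atTop]
      intro m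
      refine ⟨N + 2 ^ m, by have := Nat.lt_two_pow_self (n := m); omega, ?_⟩
      apply half_le_d2
      rw [shift_iter, shift_iter]
      simp only [zero_add]
      rw [hflip m]
      exact (Bool.not_ne_self _).symm
    · exact isBoundedUnder_of ⟨1, fun n => d2_le_one _ _⟩
  · -- liminf = 0
    apply le_antisymm
    · have key : ∀ m : ℕ,
          liminf (fun n => d2 (shift^[n] x) (shift^[n] y)) atTop ≤ (1/2 : ℝ) ^ m := by
        intro m
        apply liminf_le_of_frequently_le
        · rw [frequently_atTop]
          intro m0
          set k := max m m0 with hk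
          have hk2 : k < 2 ^ k := Nat.lt_two_pow_self (n := k)
          refine ⟨N + 2 ^ k + 1, by omega, ?_⟩
          refine le_trans (d2_le_pow _ _ m (fun i hi => ?_)) (by
            apply pow_le_pow_of_le_one (by norm_num) (by norm_num)
            omega)
          rw [shift_iter, shift_iter]
          have hidx : i + (N + 2 ^ k + 1) = N + 2 ^ k + 1 + i := by omega
          rw [hidx]
          exact (hagree k i (by omega)).symm
        · exact isBoundedUnder_of ⟨0, fun n => d2_nonneg _ _⟩
      have h0 : Tendsto (fun m : ℕ => (1/2 : ℝ) ^ m) atTop (nhds 0) :=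
        tendsto_pow_atTop_nhds_zero_of_lt_one (by norm_num) (by norm_num)
      exact ge_of_tendsto h0 (Eventually.of_forall key)
    · exact le_liminf_of_le
        (IsBoundedUnder.isCoboundedUnder_ge (isBoundedUnder_of ⟨1, fun n => d2_le_one _ _⟩))
        (Eventually.of_forall fun n => d2_nonneg _ _)
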